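/- Let p ≡ q ≡ 1 (mod 4) be distinct primes with (p/q) = 1, write p = a² + b², a odd, b even, and let i be a square root of −1 mod q (which exists since q ≡ 1 mod 4). Then (p/q)₄·(q/p)₄ = ((a + b·i)/q). -/

import Mathlib

/-- The rational quartic residue symbol `(m/p)₄ = m^((p−1)/4) mod p`, recorded as an
integer: it is `1` or `−1` when `m^((p−1)/4) = ±1` in `ZMod p`, and `0` otherwise. -/
def quarticSym (p : ℕ) (m : ℤ) : ℤ :=
  if (m : ZMod p) ^ ((p - 1) / 4) = 1 then 1
  else if (m : ZMod p) ^ ((p - 1) / 4) = -1 then -1 else 0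

/-- `a` and `b` are coprime when `a² + b² = p` is prime. -/
lemma coprime_of_sq_add_sq_prime {p : ℕ} (hp : p.Prime) {a b : ℤ} (h : a ^ 2 + b ^ 2 = p) :
    IsCoprime a b := by
  rw [Int.isCoprime_iff_gcd_eq_one]
  by_contra hg
  set d := Int.gcd a b with hd
  have hda : (d : ℤ) ∣ a := Int.gcd_dvd_left a b
  have hdb : (d : ℤ) ∣ b := Int.gcd_dvd_right a b
  have hdd : ((d * d : ℕ) : ℤ) ∣ (p : ℤ) := by
    push_cast
    rw [← h]
    exact dvd_add (by rw [sq]; exact mul_dvd_mul hda hda) (by rw [sq]; exact mul_dvd_mul hdb hdb)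
  have hdd' : d * d ∣ p := Int.ofNat_dvd.mp hdd
  rcases (Nat.Prime.eq_one_or_self_of_dvd hp _ hdd') with h1 | h1
  · have : d = 1 := Nat.eq_one_of_mul_eq_one_left h1
    exact hg this
  · have hdvd : d ∣ p := ⟨d, h1.symm⟩
    rcases (Nat.Prime.eq_one_or_self_of_dvd hp _ hdvd) with h2 | h2
    · exact hg h2
    · have := hp.two_le
      nlinarith [h1, h2]

/-- Auxiliary step: if moreover `p ∣ aB − bA`, then `A = ±a` and `B = ±b`. -/
lemma sq_add_sq_aux {p : ℕ} (hp : p.Prime) {a b A B : ℤ} (h1 : a ^ 2 + b ^ 2 = p)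
    (h2 : A ^ 2 + B ^ 2 = p) (ha : Odd a) (hB : Even B)
    (hdvd : (p : ℤ) ∣ a * B - b * A) :
    (A = a ∨ A = -a) ∧ (B = b ∨ B = -b) := by
  have cop_ab : IsCoprime a b := coprime_of_sq_add_sq_prime hp h1
  have cop_AB : IsCoprime A B := coprime_of_sq_add_sq_prime hp h2
  have ha0 : a ≠ 0 := by rintro rfl; simp at ha
  have hppos : (0 : ℤ) < p := by exact_mod_cast hp.pos
  have bound : (a * B - b * A) ^ 2 + (a * A + b * B) ^ 2 = (p : ℤ) ^ 2 := by
    linear_combination (A ^ 2 + B ^ 2) * h1 + (p : ℤ) * h2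
  obtain ⟨k, hk⟩ := hdvd
  have hb2 : ((p : ℤ) * k) ^ 2 + (a * A + b * B) ^ 2 = (p : ℤ) ^ 2 := by
    rw [← hk]; exact bound
  have hp2 : (0 : ℤ) < (p : ℤ) ^ 2 := by positivity
  have hk1 : k = 0 ∨ k = 1 ∨ k = -1 := by
    have hle : k ^ 2 ≤ 1 := by nlinarith [hb2, sq_nonneg (a * A + b * B), hp2]
    have h2' : -1 ≤ k ∧ k ≤ 1 := by constructor <;> nlinarith
    omega
  rcases hk1 with rfl | hk1
  · -- a * B = b * A
    have hab : a * B = b * A := by linear_combination hk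
    have hAa : a ∣ A := cop_ab.dvd_of_dvd_mul_left ⟨B, by linear_combination -hab⟩
    have haA : A ∣ a := cop_AB.dvd_of_dvd_mul_left ⟨b, by linear_combination hab⟩
    have habs : A.natAbs = a.natAbs :=
      Nat.dvd_antisymm (Int.natAbs_dvd_natAbs.mpr haA) (Int.natAbs_dvd_natAbs.mpr hAa)
    have hAeq : A = a ∨ A = -a := Int.natAbs_eq_natAbs_iff.mp habs
    refine ⟨hAeq, ?_⟩
    rcases hAeq with rfl | rfl
    · left; exact mul_left_cancel₀ ha0 (by linear_combination hab)
    · right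
      exact mul_left_cancel₀ ha0 (by linear_combination hab)
  · -- k = ±1 leads to a contradiction with parity
    exfalso
    have hzero : (a * A + b * B) ^ 2 = 0 := by
      rcases hk1 with rfl | rfl <;> nlinarith [bound, hk]
    have hzero' : a * A + b * B = 0 := by
      exact pow_eq_zero_iff (n := 2) (by norm_num) |>.mp hzero
    have haB : a ∣ B := cop_ab.dvd_of_dvd_mul_left ⟨-A, by linear_combination hzero'⟩
    have hBa : B ∣ a := (cop_AB.symm).dvd_of_dvd_mul_left ⟨-b, by linear_combination hzero'⟩
    have habs : B.natAbs = a.natAbs :=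
      Nat.dvd_antisymm (Int.natAbs_dvd_natAbs.mpr hBa) (Int.natAbs_dvd_natAbs.mpr haB)
    have : B = a ∨ B = -a := Int.natAbs_eq_natAbs_iff.mp habs
    rcases this with rfl | hBe
    · exact (Int.not_odd_iff_even.mpr hB) ha
    · rw [hBe, even_neg] at hB
      exact (Int.not_odd_iff_even.mpr hB) ha

/-- Uniqueness of the representation of a prime as a sum of two squares (up to signs),
when the parities of the two components are fixed. -/
lemma sq_add_sq_unique {p : ℕ} (hp : p.Prime) {a b A B : ℤ} (h1 : a ^ 2 + b ^ 2 = p)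
    (h2 : A ^ 2 + B ^ 2 = p) (ha : Odd a) (hB : Even B) :
    (A = a ∨ A = -a) ∧ (B = b ∨ B = -b) := by
  have key : (a * B - b * A) * (a * B + b * A) = ((B : ℤ) ^ 2 - b ^ 2) * p := by
    linear_combination (B ^ 2) * h1 - (b ^ 2) * h2
  have hpdvd : (p : ℤ) ∣ (a * B - b * A) * (a * B + b * A) := ⟨B ^ 2 - b ^ 2, by linarith⟩
  rcases (Int.Prime.dvd_mul' hp hpdvd) with hd | hd
  · exact sq_add_sq_aux hp h1 h2 ha hB hd
  · have h1' : a ^ 2 + (-b) ^ 2 = p := by linarith [h1]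
    have hd' : (p : ℤ) ∣ a * B - (-b) * A := by
      have : a * B - (-b) * A = a * B + b * A := by ring
      rwa [this]
    obtain ⟨hA, hB'⟩ := sq_add_sq_aux hp h1' h2 ha hB hd'
    refine ⟨hA, ?_⟩
    rcases hB' with h | h
    · right; linarith
    · left; linarith

section CharSigns

variable {q : ℕ} [Fact q.Prime]

lemma qprime_ge_five (hq4 : q % 4 = 1) : 5 ≤ q := by
  have h2 := (Fact.out : q.Prime).two_le
  rcases Nat.lt_or_ge q 5 with h | h
  · interval_cases q <;> simp_all <;> revert hq4 <;> decide
  · exact h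

lemma ringChar_zmod_ne_two (hq4 : q % 4 = 1) : ringChar (ZMod q) ≠ 2 := by
  rw [ZMod.ringChar_zmod_n]
  have := qprime_ge_five (q := q) hq4
  omega

lemma quadChar_neg (hq4 : q % 4 = 1) (x : ZMod q) :
    quadraticChar (ZMod q) (-x) = quadraticChar (ZMod q) x := by
  have h1 : quadraticChar (ZMod q) (-1) = 1 := by
    rw [quadraticChar_neg_one (ringChar_zmod_ne_two hq4), ZMod.card q, ZMod.χ₄_nat_one_mod_four hq4]
  rw [← neg_one_mul, map_mul, h1, one_mul]

lemma quadChar_pm (hq4 : q % 4 = 1) {i : ZMod q} (hi : i ^ 2 = -1)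
    {a b A B : ℤ} (hA : A = a ∨ A = -a) (hB : B = b ∨ B = -b)
    (hone : quadraticChar (ZMod q) (((a : ZMod q) + (b : ZMod q) * i) *
      ((a : ZMod q) - (b : ZMod q) * i)) = 1) :
    quadraticChar (ZMod q) ((A : ZMod q) + (B : ZMod q) * i) =
      quadraticChar (ZMod q) ((a : ZMod q) + (b : ZMod q) * i) := by
  set u : ZMod q := (a : ZMod q) + (b : ZMod q) * i with hu
  set v : ZMod q := (a : ZMod q) - (b : ZMod q) * i with hv
  have huv : quadraticChar (ZMod q) u * quadraticChar (ZMod q) v = 1 := by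
    rw [← map_mul]; exact hone
  have hu0 : u ≠ 0 := by
    intro h; rw [h, zero_mul] at hone; simp [quadraticChar_zero] at hone
  have hv0 : v ≠ 0 := by
    intro h; rw [h, mul_zero] at hone; simp [quadraticChar_zero] at hone
  have hQu := quadraticChar_isQuadratic (ZMod q) u
  have hQv := quadraticChar_isQuadratic (ZMod q) v
  have hvu : quadraticChar (ZMod q) v = quadraticChar (ZMod q) u := by
    rcases hQu with h | h | h <;> rcases hQv with h' | h' | h' <;>
      rw [h, h'] at huv ⊢ <;> omega
  have hneg := quadChar_neg (q := q) hq4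
  rcases hA with hA | hA <;> rcases hB with hB | hB
  · rw [show (A : ZMod q) + (B : ZMod q) * i = u by rw [hA, hB, hu]]
  · rw [show (A : ZMod q) + (B : ZMod q) * i = v by rw [hA, hB, hv]; push_cast; ring, hvu]
  · rw [show (A : ZMod q) + (B : ZMod q) * i = -v by rw [hA, hB, hv]; push_cast; ring, hneg, hvu]
  · rw [show (A : ZMod q) + (B : ZMod q) * i = -u by rw [hA, hB, hu]; push_cast; ring, hneg]

end CharSigns

open MulChar Zsqrtd

lemma gaussianInt_sqrtd_sq : (Zsqrtd.sqrtd : GaussianInt) ^ 2 = -1 := by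
  rw [sq, Zsqrtd.dmuld]; norm_num

lemma gaussianInt_sq_of_pow_four {y : GaussianInt} (h : y ^ 4 = 1) : y ^ 2 = 1 ∨ y ^ 2 = -1 := by
  have : (y ^ 2 - 1) * (y ^ 2 + 1) = 0 := by linear_combination h
  rcases mul_eq_zero.mp this with h' | h'
  · left; linear_combination h'
  · right; linear_combination h'

lemma jacobi_rep (p : ℕ) [Fact p.Prime] (hp4 : p % 4 = 1) :
    ∃ (χ₀ : MulChar (ZMod p) GaussianInt) (g : (ZMod p)ˣ),
      (∀ x, x ∈ Subgroup.zpowers g) ∧ χ₀ ↑g = Zsqrtd.sqrtd ∧ χ₀ ^ 4 = 1 ∧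
      Odd (jacobiSum χ₀ χ₀).re ∧ Even (jacobiSum χ₀ χ₀).im ∧
      (jacobiSum χ₀ χ₀).re ^ 2 + (jacobiSum χ₀ χ₀).im ^ 2 = (p : ℤ) := by
  classical
  have hp := (Fact.out : p.Prime)
  have hp5 : 5 ≤ p := by
    have h2 := hp.two_le
    rcases Nat.lt_or_ge p 5 with h | h
    · interval_cases p <;> simp_all
    · exact h
  obtain ⟨g, hg⟩ := IsCyclic.exists_generator (α := (ZMod p)ˣ)
  have hI4 : (Zsqrtd.sqrtd : GaussianInt) ^ 4 = 1 := by
    have : ((Zsqrtd.sqrtd : GaussianInt) ^ 2) ^ 2 = 1 := by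
      rw [gaussianInt_sqrtd_sq]; ring
    linear_combination this
  -- the unit `i` in `ℤ[i]`
  have hIunit : IsUnit (Zsqrtd.sqrtd : GaussianInt) := by
    refine IsUnit.of_mul_eq_one (-Zsqrtd.sqrtd) ?_
    have := gaussianInt_sqrtd_sq
    linear_combination -this
  set uI : GaussianIntˣ := hIunit.unit with huIdef
  have huIval : (uI : GaussianInt) = Zsqrtd.sqrtd := hIunit.unit_spec
  have hcard : Fintype.card (ZMod p)ˣ = p - 1 := by
    rw [Fintype.card_units, ZMod.card]
  have huI4 : uI ^ 4 = 1 := by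
    rw [Units.ext_iff, Units.val_pow_eq_pow_val, huIval, hI4, Units.val_one]
  have huI : uI ∈ rootsOfUnity (Fintype.card (ZMod p)ˣ) GaussianInt := by
    rw [mem_rootsOfUnity]
    obtain ⟨t, ht⟩ : ∃ t, p - 1 = 4 * t := ⟨(p - 1) / 4, by omega⟩
    rw [hcard, ht, pow_mul, huI4, one_pow]
  set χ₀ : MulChar (ZMod p) GaussianInt := MulChar.ofRootOfUnity huI hg with hχ₀def
  have hχg : χ₀ ↑g = Zsqrtd.sqrtd := by
    rw [hχ₀def, MulChar.ofRootOfUnity_spec huI hg, huIval]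
  have hχ4 : χ₀ ^ 4 = 1 := by
    rw [MulChar.eq_iff hg, pow_apply' χ₀ (by norm_num), hχg, hI4, MulChar.one_apply_coe]
  refine ⟨χ₀, g, hg, hχg, hχ4, ?_⟩
  -- values of `χ₀` are fourth roots of unity
  have hval : ∀ x : ZMod p, x ≠ 0 → (χ₀ x) ^ 4 = 1 := by
    intro x hx
    rw [← pow_apply' χ₀ (by norm_num), hχ4, MulChar.one_apply (isUnit_iff_ne_zero.mpr hx)]
  -- norm of the Jacobi sum, via ℂ
  have hnorm : (jacobiSum χ₀ χ₀).re ^ 2 + (jacobiSum χ₀ χ₀).im ^ 2 = (p : ℤ) := by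
    have hIC : (Complex.I * Complex.I : ℂ) = ((-1 : ℤ) : ℂ) := by
      rw [Complex.I_mul_I]; norm_num
    set fC : GaussianInt →+* ℂ := Zsqrtd.lift ⟨Complex.I, hIC⟩ with hfCdef
    have hfCI : fC Zsqrtd.sqrtd = Complex.I := by
      simp [hfCdef, Zsqrtd.lift]
    set χC : MulChar (ZMod p) ℂ := χ₀.ringHomComp fC with hχCdef
    have hχCg : χC ↑g = Complex.I := by
      rw [hχCdef, MulChar.ringHomComp_apply, hχg, hfCI]
    have hχC1 : χC ≠ 1 := by
      refine ne_one_iff.mpr ⟨g, ?_⟩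
      rw [hχCg]
      simp [Complex.ext_iff]
    have hχCC : χC * χC ≠ 1 := by
      refine ne_one_iff.mpr ⟨g, ?_⟩
      rw [MulChar.mul_apply, hχCg, Complex.I_mul_I]
      norm_num
    have hchar : ringChar ℂ ≠ ringChar (ZMod p) := by
      rw [ringChar.eq_zero, ZMod.ringChar_zmod_n]
      exact fun h => hp.ne_zero h.symm
    have hkey := jacobiSum_mul_jacobiSum_inv hchar hχC1 hχC1 hχCC
    have hstar : jacobiSum χC⁻¹ χC⁻¹ = (starRingEnd ℂ) (jacobiSum χC χC) := by
      rw [← MulChar.star_eq_inv χC]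
      exact jacobiSum_ringHomComp χC χC (starRingEnd ℂ)
    have hJC : jacobiSum χC χC = fC (jacobiSum χ₀ χ₀) := by
      rw [hχCdef]; exact jacobiSum_ringHomComp χ₀ χ₀ fC
    set A : ℤ := (jacobiSum χ₀ χ₀).re
    set B : ℤ := (jacobiSum χ₀ χ₀).im
    have hfCJ : fC (jacobiSum χ₀ χ₀) = (A : ℂ) + (B : ℂ) * Complex.I := by
      simp [hfCdef, Zsqrtd.lift, A, B]
    have hconj : (starRingEnd ℂ) (fC (jacobiSum χ₀ χ₀)) = (A : ℂ) - (B : ℂ) * Complex.I := by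
      rw [hfCJ]
      simp [Complex.conj_I, sub_eq_add_neg, mul_comm]
    have hfin : ((A ^ 2 + B ^ 2 : ℤ) : ℂ) = ((p : ℕ) : ℂ) := by
      have := hkey
      rw [hstar, hJC, hconj, hfCJ, ZMod.card] at this
      push_cast
      linear_combination this + ((B : ℂ)) ^ 2 * Complex.I_sq
    exact_mod_cast hfin
  -- parity of the Jacobi sum, via reduction mod 2
  have h2p : (2 : ZMod p) ≠ 0 := by
    have h : ringChar (ZMod p) ≠ 2 := by rw [ZMod.ringChar_zmod_n]; omega
    exact Ring.two_ne_zero h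
  set c : ZMod p := (2 : ZMod p)⁻¹ with hcdef
  have h2c : (2 : ZMod p) * c = 1 := mul_inv_cancel₀ h2p
  have hc : (1 : ZMod p) - c = c := by linear_combination -h2c
  set Iq : Ideal GaussianInt := Ideal.span {(2 : GaussianInt)} with hIqdef
  have hπJ : Ideal.Quotient.mk Iq (jacobiSum χ₀ χ₀) = Ideal.Quotient.mk Iq (χ₀ c * χ₀ c) := by
    rw [jacobiSum, map_sum,
      ← Finset.add_sum_erase Finset.univ (fun x => Ideal.Quotient.mk Iq (χ₀ x * χ₀ (1 - x)))
        (Finset.mem_univ c), hc]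
    have hz : ∑ x ∈ Finset.univ.erase c, Ideal.Quotient.mk Iq (χ₀ x * χ₀ (1 - x)) = 0 := by
      refine Finset.sum_involution (fun x _ => 1 - x) ?_ ?_ ?_ ?_
      · intro x hx
        have hsw : χ₀ (1 - x) * χ₀ (1 - (1 - x)) = χ₀ x * χ₀ (1 - x) := by
          rw [sub_sub_cancel]; ring
        simp only [hsw, ← map_add]
        rw [Ideal.Quotient.eq_zero_iff_mem, hIqdef, Ideal.mem_span_singleton]
        exact ⟨χ₀ x * χ₀ (1 - x), by ring⟩
      · intro x hx _ h
        apply (Finset.mem_erase.mp hx).1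
        have h2x : (2 : ZMod p) * x = 1 := by linear_combination -h
        calc x = (2 : ZMod p)⁻¹ * ((2 : ZMod p) * x) := by
                  rw [← mul_assoc, inv_mul_cancel₀ h2p, one_mul]
          _ = c := by rw [h2x, mul_one, hcdef]
      · intro x hx
        rw [Finset.mem_erase]
        refine ⟨?_, Finset.mem_univ _⟩
        intro h
        apply (Finset.mem_erase.mp hx).1
        have : x = 1 - c := by linear_combination -h
        rw [this, hc]
      · intro x _; exact sub_sub_cancel 1 x
    rw [hz, add_zero]
  have hdvd : (2 : GaussianInt) ∣ jacobiSum χ₀ χ₀ - χ₀ c * χ₀ c := by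
    rw [← Ideal.mem_span_singleton, ← hIqdef, ← Ideal.Quotient.mk_eq_mk_iff_sub_mem]
    exact hπJ
  have hc0 : c ≠ 0 := inv_ne_zero h2p
  have he2 := gaussianInt_sq_of_pow_four (hval c hc0)
  obtain ⟨w, hw⟩ := hdvd
  have hw' : jacobiSum χ₀ χ₀ - χ₀ c * χ₀ c = w + w := by rw [hw]; ring
  have hre := congrArg Zsqrtd.re hw'
  have him := congrArg Zsqrtd.im hw'
  rw [Zsqrtd.re_sub, Zsqrtd.re_add] at hre
  rw [Zsqrtd.im_sub, Zsqrtd.im_add] at him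
  have hsq : χ₀ c * χ₀ c = (χ₀ c) ^ 2 := (sq (χ₀ c)).symm
  rcases he2 with h | h
  · rw [hsq, h, Zsqrtd.re_one] at hre
    rw [hsq, h, Zsqrtd.im_one] at him
    exact ⟨⟨w.re, by omega⟩, ⟨w.im, by omega⟩, hnorm⟩
  · rw [hsq, h, Zsqrtd.re_neg, Zsqrtd.re_one] at hre
    rw [hsq, h, Zsqrtd.im_neg, Zsqrtd.im_one] at him
    exact ⟨⟨w.re - 1, by omega⟩, ⟨w.im, by omega⟩, hnorm⟩


lemma neg_one_ne_one_zmod (q : ℕ) [Fact q.Prime] (hq5 : 5 ≤ q) : (-1 : ZMod q) ≠ 1 := by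
  apply Ring.neg_one_ne_one_of_char_ne_two
  rw [ZMod.ringChar_zmod_n]
  omega

lemma quarticSym_spec {q : ℕ} [Fact q.Prime] (hq4 : q % 4 = 1) {m : ℤ}
    (hm0 : (m : ZMod q) ≠ 0) (hm : IsSquare ((m : ℤ) : ZMod q)) :
    (quarticSym q m = 1 ∨ quarticSym q m = -1) ∧
      ((quarticSym q m : ℤ) : ZMod q) = (m : ZMod q) ^ ((q - 1) / 4) := by
  have hq5 : 5 ≤ q := qprime_ge_five hq4
  obtain ⟨u, hu⟩ := hm
  have hu0 : u ≠ 0 := by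
    intro h; rw [h, mul_zero] at hu; exact hm0 hu
  have hsq : (m : ZMod q) ^ ((q - 1) / 4) = u ^ ((q - 1) / 2) := by
    rw [hu, ← sq, ← pow_mul, show 2 * ((q - 1) / 4) = (q - 1) / 2 by omega]
  have hx2 : ((m : ZMod q) ^ ((q - 1) / 4)) ^ 2 = 1 := by
    rw [hsq, ← pow_mul, show (q - 1) / 2 * 2 = q - 1 by omega]
    exact ZMod.pow_card_sub_one_eq_one hu0
  have hx : (m : ZMod q) ^ ((q - 1) / 4) = 1 ∨ (m : ZMod q) ^ ((q - 1) / 4) = -1 := by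
    rcases mul_self_eq_one_iff.mp (by rw [pow_two] at hx2; exact hx2) with h | h
    · exact Or.inl h
    · exact Or.inr h
  rcases hx with h | h
  · rw [quarticSym, if_pos h, h]
    norm_num
  · rw [quarticSym, if_neg (by rw [h]; exact neg_one_ne_one_zmod q hq5), if_pos h, h]
    norm_num

lemma main_identity (p q : ℕ) [Fact p.Prime] [Fact q.Prime] (hne : p ≠ q)
    (hp4 : p % 4 = 1) (hq4 : q % 4 = 1) (hqp : legendreSym q (p : ℤ) = 1)
    (i : ZMod q) (hi : i ^ 2 = -1) :
    ∃ A B : ℤ, A ^ 2 + B ^ 2 = (p : ℤ) ∧ Odd A ∧ Even B ∧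
      quarticSym q (p : ℤ) * quarticSym p (q : ℤ) =
        quadraticChar (ZMod q) ((A : ZMod q) + (B : ZMod q) * i) := by
  classical
  have hpP := (Fact.out : p.Prime)
  have hqP := (Fact.out : q.Prime)
  have hp5 : 5 ≤ p := qprime_ge_five hp4
  have hq5 : 5 ≤ q := qprime_ge_five hq4
  obtain ⟨χ₀, g, hg, hχg, hχ4, hAodd, hBeven, hnorm⟩ := jacobi_rep p hp4
  set A : ℤ := (jacobiSum χ₀ χ₀).re with hAdef
  set B : ℤ := (jacobiSum χ₀ χ₀).im with hBdef
  -- the target field F of characteristic q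
  have hch : ringChar (ZMod q) ≠ ringChar (ZMod p) := by
    rw [ZMod.ringChar_zmod_n, ZMod.ringChar_zmod_n]
    exact fun h => hne h.symm
  set ν := AddChar.FiniteField.primitiveChar (ZMod p) (ZMod q) hch with hνdef
  set F := CyclotomicField ν.n (ZMod q) with hFdef
  have hcharF : ringChar F = q := by
    rw [← Algebra.ringChar_eq (ZMod q) F, ZMod.ringChar_zmod_n]
  haveI : CharP F q := ⟨fun x => by
    have h := ringChar.spec F x
    rw [hcharF] at h
    exact h⟩
  have hcharF2 : ringChar F ≠ 2 := by rw [hcharF]; omega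
  set ιq : ZMod q →+* F := algebraMap (ZMod q) F with hιqdef
  have hinj : Function.Injective ιq := ιq.injective
  set jF : F := ιq i with hjFdef
  have hjF2 : jF * jF = ((-1 : ℤ) : F) := by
    rw [hjFdef, ← map_mul, ← sq, hi]
    push_cast
    rw [map_neg, map_one]
  set fF : GaussianInt →+* F := Zsqrtd.lift ⟨jF, hjF2⟩ with hfFdef
  have hfFI : fF Zsqrtd.sqrtd = jF := by simp [hfFdef, Zsqrtd.lift]
  set χF : MulChar (ZMod p) F := χ₀.ringHomComp fF with hχFdef
  have hχFg : χF ↑g = jF := by rw [hχFdef, MulChar.ringHomComp_apply, hχg, hfFI]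
  have hneg1 : ((-1 : ℤ) : F) = -1 := by push_cast; ring
  have hjF2' : jF * jF = -1 := by rw [hjF2, hneg1]
  have hn11F : (-1 : F) ≠ 1 := Ring.neg_one_ne_one_of_char_ne_two hcharF2
  have hχF1 : χF ≠ 1 := by
    refine MulChar.ne_one_iff.mpr ⟨g, ?_⟩
    rw [hχFg]
    intro h
    rw [h] at hjF2'
    simp only [mul_one] at hjF2'
    exact hn11F hjF2'.symm
  have hχFC : χF * χF ≠ 1 := by
    refine MulChar.ne_one_iff.mpr ⟨g, ?_⟩
    rw [MulChar.mul_apply, hχFg, hjF2']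
    exact hn11F
  -- χF has fourth power one
  have hχF4 : χF ^ 4 = 1 := by
    rw [MulChar.eq_iff hg, MulChar.pow_apply' χF (by norm_num), hχFg, MulChar.one_apply_coe,
      show jF ^ 4 = (jF * jF) * (jF * jF) by ring, hjF2']
    ring
  have hval4 : ∀ x : ZMod p, x ≠ 0 → (χF x) ^ 4 = 1 := by
    intro x hx
    rw [← MulChar.pow_apply' χF (by norm_num), hχF4,
      MulChar.one_apply (isUnit_iff_ne_zero.mpr hx)]
  have hquadF : (χF * χF).IsQuadratic := by
    intro x
    rcases eq_or_ne x 0 with rfl | hx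
    · left
      rw [MulChar.mul_apply, MulChar.map_nonunit χF (by simp [isUnit_iff_ne_zero]), mul_zero]
    · have h4 := hval4 x hx
      have : (χF x ^ 2 - 1) * (χF x ^ 2 + 1) = 0 := by linear_combination h4
      rcases mul_eq_zero.mp this with h | h
      · right; left
        rw [MulChar.mul_apply, ← sq]
        linear_combination h
      · right; right
        rw [MulChar.mul_apply, ← sq]
        linear_combination h
  set ψ := ν.char with hψdef
  have hψprim := ν.prim
  have hpF : ((p : ℕ) : F) ≠ 0 := by
    rw [Ne, CharP.cast_eq_zero_iff F q p]
    intro hdvd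
    exact hne ((Nat.prime_dvd_prime_iff_eq hqP hpP).mp hdvd).symm
  have hcardF : ((Fintype.card (ZMod p) : ℕ) : F) ≠ 0 := by rw [ZMod.card]; exact hpF
  have hg0 : gaussSum χF ψ ≠ 0 := gaussSum_ne_zero_of_nontrivial hcardF hχF1 hψprim
  -- Frobenius relation
  have hqZp : (q : ZMod p) ≠ 0 := by
    rw [Ne, ZMod.natCast_eq_zero_iff]
    intro hdvd
    exact hne ((Nat.prime_dvd_prime_iff_eq hpP hqP).mp hdvd)
  have hqu : IsUnit (q : ZMod p) := isUnit_iff_ne_zero.mpr hqZp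
  have hχFq : χF ^ q = χF := by
    obtain ⟨t, ht⟩ : ∃ t, q = 4 * t + 1 := ⟨q / 4, by omega⟩
    have h41 : χF ^ (4 * t + 1) = χF := by
      rw [pow_succ, pow_mul, hχF4, one_pow, one_mul]
    rw [← ht] at h41
    exact h41
  have hfrob : χF (q : ZMod p) * gaussSum χF ψ ^ q = gaussSum χF ψ := by
    rw [gaussSum_frob q χF ψ, hχFq, AddChar.pow_mulShift ψ q,
      show ((q : ZMod p)) = ((hqu.unit : (ZMod p)ˣ) : ZMod p) by rw [IsUnit.unit_spec]]
    exact gaussSum_mulShift χF ψ hqu.unit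
  -- fourth power of the Gauss sum
  have hJmul : gaussSum χF ψ * gaussSum χF ψ = jacobiSum χF χF * gaussSum (χF * χF) ψ :=
    (jacobiSum_mul_nontrivial hχFC ψ).symm.trans (mul_comm _ _)
  have hm1 : (χF * χF) (-1) = 1 := by
    rw [MulChar.mul_apply, ← map_mul, neg_mul_neg, one_mul, map_one]
  have hg2sq : gaussSum (χF * χF) ψ ^ 2 = ((p : ℕ) : F) := by
    rw [gaussSum_sq hχFC hquadF hψprim, hm1, one_mul, ZMod.card]
  have h4 : gaussSum χF ψ ^ 4 = jacobiSum χF χF ^ 2 * ((p : ℕ) : F) := by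
    have e1 : gaussSum χF ψ ^ 4 = (gaussSum χF ψ * gaussSum χF ψ) ^ 2 := by ring
    rw [e1, hJmul, mul_pow, hg2sq]
  -- the main identity in F
  have main : χF (q : ZMod p) *
      (jacobiSum χF χF ^ ((q - 1) / 2) * ((p : ℕ) : F) ^ ((q - 1) / 4)) = 1 := by
    have e2 : gaussSum χF ψ ^ q = gaussSum χF ψ ^ (q - 1) * gaussSum χF ψ := by
      rw [← pow_succ, show q - 1 + 1 = q by omega]
    have e3 : gaussSum χF ψ ^ (q - 1) =
        jacobiSum χF χF ^ ((q - 1) / 2) * ((p : ℕ) : F) ^ ((q - 1) / 4) := by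
      obtain ⟨s, hs⟩ : ∃ s, q - 1 = 4 * s := ⟨(q - 1) / 4, by omega⟩
      have h2s : (q - 1) / 2 = 2 * s := by omega
      have h4s : (q - 1) / 4 = s := by omega
      rw [h2s, h4s, hs, pow_mul, h4, mul_pow, ← pow_mul]
    have := hfrob
    rw [e2, e3, ← mul_assoc] at this
    have h1g : (1 : F) * gaussSum χF ψ = gaussSum χF ψ := one_mul _
    exact mul_right_cancel₀ hg0 (this.trans h1g.symm)
  -- evaluate the three factors
  have hJF : jacobiSum χF χF = ιq ((A : ZMod q) + (B : ZMod q) * i) := by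
    have h1 : jacobiSum χF χF = fF (jacobiSum χ₀ χ₀) := by
      rw [hχFdef]; exact jacobiSum_ringHomComp χ₀ χ₀ fF
    have h2 : fF (jacobiSum χ₀ χ₀) = (A : F) + (B : F) * jF := by
      simp [hfFdef, Zsqrtd.lift, hAdef, hBdef]
    have h3 : ιq ((A : ZMod q) + (B : ZMod q) * i) = (A : F) + (B : F) * jF := by
      rw [map_add, map_mul, map_intCast, map_intCast, hjFdef]
    rw [h1, h2, h3]
  set w : ZMod q := (A : ZMod q) + (B : ZMod q) * i with hwdef
  have hpzq : ((p : ℕ) : ZMod q) ≠ 0 := by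
    rw [Ne, ZMod.natCast_eq_zero_iff]
    intro hdvd
    exact hne ((Nat.prime_dvd_prime_iff_eq hqP hpP).mp hdvd).symm
  have hw0 : w ≠ 0 := by
    intro h
    have hc : ((A ^ 2 + B ^ 2 : ℤ) : ZMod q) = ((p : ℕ) : ZMod q) := by
      rw [hnorm]; push_cast; ring
    have hmulw : w * ((A : ZMod q) - (B : ZMod q) * i) = ((p : ℕ) : ZMod q) := by
      rw [hwdef]
      push_cast at hc ⊢
      linear_combination (-((B : ZMod q)) ^ 2) * hi + hc
    rw [h, zero_mul] at hmulw
    exact hpzq hmulw.symm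
  set e : ℤ := quadraticChar (ZMod q) w with hedef
  have he : e = 1 ∨ e = -1 := by
    rcases quadraticChar_isQuadratic (ZMod q) w with h | h | h
    · exact absurd (quadraticChar_eq_zero_iff.mp h) hw0
    · exact Or.inl h
    · exact Or.inr h
  have hwpow : ((e : ℤ) : ZMod q) = w ^ ((q - 1) / 2) := by
    have h := quadraticChar_eq_pow_of_char_ne_two' (ringChar_zmod_ne_two hq4) w
    rw [ZMod.card, show q / 2 = (q - 1) / 2 by omega] at h
    exact h
  -- factor `p^((q-1)/4)`
  have hsqp : IsSquare (((p : ℕ) : ℤ) : ZMod q) :=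
    (legendreSym.eq_one_iff q (by push_cast; exact hpzq)).mp hqp
  obtain ⟨hs2pm, hs2cast⟩ := quarticSym_spec hq4 (m := ((p : ℕ) : ℤ)) (by push_cast; exact hpzq) hsqp
  have hpF4 : ((p : ℕ) : F) ^ ((q - 1) / 4) = ιq ((quarticSym q ((p : ℕ) : ℤ) : ℤ) : ZMod q) := by
    rw [hs2cast, map_pow]
    congr 1
    rw [show (((p : ℕ) : ℤ) : ZMod q) = ((p : ℕ) : ZMod q) by push_cast; ring, map_natCast]
  -- factor `χF q`
  have hQp : legendreSym p ((q : ℕ) : ℤ) = 1 :=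
    (legendreSym.quadratic_reciprocity_one_mod_four hp4 (by omega : q ≠ 2)).symm.trans hqp
  have hsqq : IsSquare ((q : ℕ) : ZMod p) := (legendreSym.eq_one_iff' p hqZp).mp hQp
  obtain ⟨u, hu⟩ := hsqq
  have hu0 : u ≠ 0 := fun h => hqZp (by rw [hu, h, mul_zero])
  set U : (ZMod p)ˣ := (isUnit_iff_ne_zero.mpr hu0).unit with hUdef
  have hUval : (U : ZMod p) = u := IsUnit.unit_spec _
  obtain ⟨k, hk0⟩ := mem_powers_iff_mem_zpowers.mpr (hg U)
  have hk : g ^ k = U := hk0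
  have hu' : u = ((g ^ k : (ZMod p)ˣ) : ZMod p) := by rw [hk, hUval]
  have hcardP : Fintype.card (ZMod p)ˣ = p - 1 := by rw [Fintype.card_units, ZMod.card]
  have horder : orderOf g = p - 1 := by
    rw [orderOf_eq_card_of_forall_mem_zpowers hg, Nat.card_eq_fintype_card, hcardP]
  have hg2 : ((g ^ ((p - 1) / 2) : (ZMod p)ˣ) : ZMod p) = -1 := by
    have hsq1 : (g ^ ((p - 1) / 2)) ^ 2 = 1 := by
      rw [← pow_mul, show (p - 1) / 2 * 2 = p - 1 by omega, ← hcardP, pow_card_eq_one]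
    have hne1 : g ^ ((p - 1) / 2) ≠ 1 := by
      intro h
      have hdvd := orderOf_dvd_of_pow_eq_one h
      rw [horder] at hdvd
      have := Nat.le_of_dvd (by omega) hdvd
      omega
    have hxx : ((g ^ ((p - 1) / 2) : (ZMod p)ˣ) : ZMod p) *
        ((g ^ ((p - 1) / 2) : (ZMod p)ˣ) : ZMod p) = 1 := by
      rw [← Units.val_mul, ← pow_two, hsq1, Units.val_one]
    rcases mul_self_eq_one_iff.mp hxx with h | h
    · exact absurd (Units.val_eq_one.mp h) hne1
    · exact h
  have hxq : (((q : ℕ) : ℤ) : ZMod p) ^ ((p - 1) / 4) = (-1 : ZMod p) ^ k := by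
    have h1 : (((q : ℕ) : ℤ) : ZMod p) = u * u := by
      rw [show (((q : ℕ) : ℤ) : ZMod p) = ((q : ℕ) : ZMod p) by push_cast; ring, hu]
    rw [h1, ← pow_two, ← pow_mul, show 2 * ((p - 1) / 4) = (p - 1) / 2 by omega, hu',
      ← Units.val_pow_eq_pow_val, ← pow_mul, mul_comm k ((p - 1) / 2), pow_mul,
      Units.val_pow_eq_pow_val, hg2]
  have hχFq_val : χF ((q : ℕ) : ZMod p) = (-1 : F) ^ k := by
    rw [hu, map_mul, hu', Units.val_pow_eq_pow_val, map_pow, hχFg, ← mul_pow, hjF2']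
  have hqsB : (quarticSym p ((q : ℕ) : ℤ) = 1 ∨ quarticSym p ((q : ℕ) : ℤ) = -1) ∧
      χF ((q : ℕ) : ZMod p) = ((quarticSym p ((q : ℕ) : ℤ) : ℤ) : F) := by
    rcases Nat.even_or_odd k with hk2 | hk2
    · have h1 : ((-1 : ZMod p)) ^ k = 1 := hk2.neg_one_pow
      have h2 : ((-1 : F)) ^ k = 1 := hk2.neg_one_pow
      have hcond : (((q : ℕ) : ℤ) : ZMod p) ^ ((p - 1) / 4) = 1 := by rw [hxq, h1]
      constructor
      · left; simp only [quarticSym]; rw [if_pos hcond]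
      · rw [hχFq_val, h2]; simp only [quarticSym]; rw [if_pos hcond]; norm_num
    · have h1 : ((-1 : ZMod p)) ^ k = -1 := hk2.neg_one_pow
      have h2 : ((-1 : F)) ^ k = -1 := hk2.neg_one_pow
      have hne11p : (-1 : ZMod p) ≠ 1 := neg_one_ne_one_zmod p hp5
      have hcond : (((q : ℕ) : ℤ) : ZMod p) ^ ((p - 1) / 4) = -1 := by rw [hxq, h1]
      have hcond' : ¬((((q : ℕ) : ℤ) : ZMod p) ^ ((p - 1) / 4) = 1) := by
        rw [hcond]; exact hne11p
      constructor
      · right; simp only [quarticSym]; rw [if_neg hcond', if_pos hcond]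
      · rw [hχFq_val, h2]; simp only [quarticSym]; rw [if_neg hcond', if_pos hcond]; norm_num
  -- assemble
  set s1 : ℤ := quarticSym p ((q : ℕ) : ℤ) with hs1def
  set s2 : ℤ := quarticSym q ((p : ℕ) : ℤ) with hs2def
  have hfinalF : ((s1 * e * s2 : ℤ) : F) = ((1 : ℤ) : F) := by
    have h := main
    rw [hqsB.2, hJF, ← map_pow, ← hwpow, map_intCast, hpF4, map_intCast] at h
    push_cast
    rw [mul_assoc]
    erw [Int.cast_mul, Int.cast_mul]; exact h
  have hZq : ((s1 * e * s2 : ℤ) : ZMod q) = ((1 : ℤ) : ZMod q) := by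
    apply hinj
    rw [map_intCast, map_intCast]
    exact hfinalF
  have hZ : s1 * e * s2 = 1 := by
    have hcases : s1 * e * s2 = 1 ∨ s1 * e * s2 = -1 := by
      rcases hqsB.1 with h | h <;> rcases he with h' | h' <;> rcases hs2pm with h'' | h'' <;>
        rw [h, h', h''] <;> norm_num
    rcases hcases with h | h
    · exact h
    · exfalso
      rw [h] at hZq
      have h2 : ((2 : ℤ) : ZMod q) = 0 := by
        push_cast at hZq ⊢
        linear_combination -hZq
      rw [ZMod.intCast_zmod_eq_zero_iff_dvd] at h2
      have := Int.le_of_dvd (by norm_num) h2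
      omega
  refine ⟨A, B, hnorm, hAodd, hBeven, ?_⟩
  show s2 * s1 = e
  rcases hqsB.1 with h1 | h1 <;> rcases hs2pm with h2 | h2 <;> rcases he with h3 | h3 <;>
    rw [h1, h2, h3] at hZ ⊢ <;> (try norm_num at hZ) <;> norm_num

/-- let `p ≡ q ≡ 1 (mod 4)` be distinct primes with `(p/q) = 1`,
`p = a² + b²` with `a` odd, `b` even, and `i` a square root of `−1` mod `q`.  Then
`(p/q)₄·(q/p)₄ = ((a + b·i)/q)`. -/
theorem quartic_reciprocity_gauss_form (p q : ℕ) [Fact p.Prime] [Fact q.Prime] (hne : p ≠ q)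
    (hp4 : p % 4 = 1) (hq4 : q % 4 = 1) (hpq : legendreSym q p = 1)
    (a b : ℤ) (hp : (p : ℤ) = a ^ 2 + b ^ 2) (ha : Odd a) (hb : Even b)
    (i : ZMod q) (hi : i ^ 2 = -1) :
    quarticSym q (p : ℤ) * quarticSym p (q : ℤ) =
      quadraticChar (ZMod q) ((a : ZMod q) + (b : ZMod q) * i) := by
  obtain ⟨A, B, hnorm, hA, hB, hmain⟩ := main_identity p q hne hp4 hq4 hpq i hi
  rw [hmain]
  have h1 : a ^ 2 + b ^ 2 = (p : ℤ) := hp.symm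
  obtain ⟨hApm, hBpm⟩ := sq_add_sq_unique (Fact.out : p.Prime) h1 hnorm ha hB
  have hone : quadraticChar (ZMod q)
      (((a : ZMod q) + (b : ZMod q) * i) * ((a : ZMod q) - (b : ZMod q) * i)) = 1 := by
    have harg : ((a : ZMod q) + (b : ZMod q) * i) * ((a : ZMod q) - (b : ZMod q) * i) =
        (((p : ℕ) : ℤ) : ZMod q) := by
      have hc : ((a ^ 2 + b ^ 2 : ℤ) : ZMod q) = (((p : ℕ) : ℤ) : ZMod q) := by rw [h1]
      push_cast at hc ⊢
      linear_combination (-((b : ZMod q)) ^ 2) * hi + hc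
    rw [harg]
    exact hpq
  exact quadChar_pm hq4 hi hApm hBpm hone
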